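/- Let β ∈ [0,1), λ = 1−β, and let n satisfy Assumption 1 with δ* > 2λ. Then the variance of the clone size converges: lim_{t→∞} Var(Y_t) = (δ*/λ)·(2/(δ*−2λ) − (2−λ)/(δ*−λ)) − (δ*/(δ*−λ))². -/

import Mathlib

open Filter Real intervalIntegral

/-- Assumption 1 on the wild-type growth function `n`. -/
def Assumption1 (n : ℝ → ℝ) : Prop :=
  (∀ τ : ℝ, τ < 0 → n τ = 0) ∧
  ContinuousOn n (Set.Ioi 0) ∧
  Filter.Tendsto n (nhdsWithin 0 (Set.Ioi 0)) (nhds (n 0)) ∧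
  (∀ τ : ℝ, 0 < τ → 0 < n τ) ∧
  MonotoneOn n (Set.Ioi 0) ∧
  (∀ x : ℝ, 0 ≤ x → ∃ L : ℝ, 0 < L ∧
    Filter.Tendsto (fun t : ℝ => n (t - x) / n t) Filter.atTop (nhds L))

open MeasureTheory Set

lemma aux_nonneg {n : ℝ → ℝ} (hn : Assumption1 n) : ∀ w, 0 ≤ n w := by
  intro w
  rcases lt_trichotomy w 0 with h | h | h
  · exact (hn.1 w h).ge
  · subst h
    exact ge_of_tendsto hn.2.2.1 (eventually_nhdsWithin_of_forall
      (fun s hs => (hn.2.2.2.1 s hs).le))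
  · exact (hn.2.2.2.1 w h).le

lemma aux_mono {n : ℝ → ℝ} (hn : Assumption1 n) : Monotone n := by
  intro u v huv
  rcases eq_or_lt_of_le huv with rfl | huv'
  · exact le_refl _
  rcases lt_trichotomy u 0 with hu | hu | hu
  · rw [hn.1 u hu]; exact aux_nonneg hn v
  · subst hu
    refine le_of_tendsto hn.2.2.1 ?_
    filter_upwards [Ioo_mem_nhdsGT_of_mem (Set.left_mem_Ico.mpr huv')] with s hs
    exact hn.2.2.2.2.1 hs.1 (lt_trans hs.1 hs.2) hs.2.le
  · exact hn.2.2.2.2.1 hu (lt_trans hu huv') huv'.le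

lemma aux_pointwise {n : ℝ → ℝ} (hn : Assumption1 n) {δ : ℝ}
    (hδlim : Filter.Tendsto (fun t : ℝ => Real.log (n t) / t) Filter.atTop (nhds δ))
    {x : ℝ} (hx : 0 < x) :
    Tendsto (fun t => n (t - x) / n t) atTop (nhds (Real.exp (-(δ * x)))) := by
  obtain ⟨hzero, hcont, hrc, hpos, hmono, hlim⟩ := hn
  obtain ⟨L, hL0, hLlim⟩ := hlim x hx.le
  suffices hLx : L = Real.exp (-(δ * x)) by rwa [hLx] at hLlim
  have hcast : Tendsto (fun k : ℕ => (k : ℝ)) atTop atTop := tendsto_natCast_atTop_atTop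
  have hseq2 : Tendsto (fun k : ℕ => ((k : ℝ) + 2) * x) atTop atTop :=
    Tendsto.atTop_mul_const hx (tendsto_atTop_add_const_right atTop 2 hcast)
  have hseq1 : Tendsto (fun k : ℕ => ((k : ℝ) + 1) * x) atTop atTop :=
    Tendsto.atTop_mul_const hx (tendsto_atTop_add_const_right atTop 1 hcast)
  have hratio : Tendsto (fun k : ℕ => n (((k : ℝ) + 1) * x) / n (((k : ℝ) + 2) * x))
      atTop (nhds L) := by
    refine (hLlim.comp hseq2).congr fun k => ?_
    have h : ((k : ℝ) + 2) * x - x = ((k : ℝ) + 1) * x := by ring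
    simp [Function.comp, h]
  have hu : Tendsto (fun k : ℕ =>
      Real.log (n (((k : ℝ) + 2) * x)) - Real.log (n (((k : ℝ) + 1) * x)))
      atTop (nhds (-Real.log L)) := by
    have hlog := hratio.log hL0.ne'
    have heq : ∀ k : ℕ,
        -(Real.log (n (((k : ℝ) + 1) * x) / n (((k : ℝ) + 2) * x))) =
        Real.log (n (((k : ℝ) + 2) * x)) - Real.log (n (((k : ℝ) + 1) * x)) := by
      intro k
      have h1 : (0:ℝ) < ((k : ℝ) + 1) * x := by positivity
      have h2 : (0:ℝ) < ((k : ℝ) + 2) * x := by positivity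
      rw [Real.log_div (hpos _ h1).ne' (hpos _ h2).ne']
      ring
    exact (hlog.neg).congr heq
  set f : ℕ → ℝ := fun k => Real.log (n (((k : ℝ) + 1) * x)) with hf
  have hces := hu.cesaro
  have htel : ∀ k : ℕ, (∑ i ∈ Finset.range k,
      (Real.log (n (((i : ℝ) + 2) * x)) - Real.log (n (((i : ℝ) + 1) * x)))) = f k - f 0 := by
    intro k
    have := Finset.sum_range_sub (f := f) k
    rw [← this]
    refine Finset.sum_congr rfl fun i _ => ?_
    simp only [hf]
    push_cast
    ring_nf
  have hces' : Tendsto (fun k : ℕ => (f k - f 0) / (k : ℝ)) atTop (nhds (-Real.log L)) := by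
    refine hces.congr fun k => ?_
    rw [htel k, inv_mul_eq_div]
  have hfk : Tendsto (fun k : ℕ => f k / (k : ℝ)) atTop (nhds (-Real.log L)) := by
    have h0 : Tendsto (fun k : ℕ => f 0 / (k : ℝ)) atTop (nhds 0) :=
      tendsto_const_div_atTop_nhds_zero_nat _
    have := hces'.add h0
    rw [add_zero] at this
    refine this.congr fun k => ?_
    rw [← add_div, sub_add_cancel]
  have hfk2 : Tendsto (fun k : ℕ => f k / (k : ℝ)) atTop (nhds (δ * x)) := by
    have hA : Tendsto (fun k : ℕ => f k / (((k : ℝ) + 1) * x)) atTop (nhds δ) :=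
      (hδlim.comp hseq1).congr fun k => rfl
    have hB : Tendsto (fun k : ℕ => (((k : ℝ) + 1) * x) / (k : ℝ)) atTop (nhds x) := by
      have h1 : Tendsto (fun k : ℕ => ((k : ℝ) + 1) / (k : ℝ)) atTop (nhds 1) := by
        have hh : Tendsto (fun k : ℕ => 1 + 1 / (k : ℝ)) atTop (nhds 1) := by
          simpa using (tendsto_const_nhds (x := (1:ℝ)) (f := atTop)).add
            (tendsto_one_div_atTop_nhds_zero_nat)
        refine hh.congr' ?_
        filter_upwards [eventually_gt_atTop 0] with k hk
        field_simp
      have := h1.mul_const x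
      rw [one_mul] at this
      refine this.congr fun k => ?_
      ring
    have := hA.mul hB
    refine this.congr fun k => ?_
    have h1 : ((k : ℝ) + 1) * x ≠ 0 := by positivity
    field_simp
  have hkey : -Real.log L = δ * x := tendsto_nhds_unique hfk hfk2
  rw [← Real.exp_log hL0]
  congr 1
  linarith

lemma integral_exp_neg_mul_Ioi_zero {b : ℝ} (hb : 0 < b) :
    ∫ x in Set.Ioi (0:ℝ), Real.exp (-b * x) = 1 / b := by
  have hderiv : ∀ y ∈ Set.Ici (0:ℝ),
      HasDerivAt (fun x => -b⁻¹ * Real.exp (-b * x)) (Real.exp (-b * y)) y := by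
    intro y _
    have h : HasDerivAt (fun x => -b * x) (-b) y := by
      simpa using (hasDerivAt_id y).const_mul (-b)
    have := (h.exp).const_mul (-b⁻¹)
    refine this.congr_deriv ?_
    field_simp
  have hint : IntegrableOn (fun x => Real.exp (-b * x)) (Set.Ioi (0:ℝ)) :=
    exp_neg_integrableOn_Ioi 0 hb
  have htend : Tendsto (fun x => -b⁻¹ * Real.exp (-b * x)) atTop (nhds 0) := by
    have : Tendsto (fun x : ℝ => -b * x) atTop atBot :=
      tendsto_id.const_mul_atTop_of_neg (neg_neg_iff_pos.mpr hb)
    have := (Real.tendsto_exp_atBot.comp this).const_mul (-b⁻¹)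
    simpa using this
  have := MeasureTheory.integral_Ioi_of_hasDerivAt_of_tendsto' hderiv hint htend
  rw [this]
  simp [one_div]

lemma aux_iter {n : ℝ → ℝ} (hmono : Monotone n) {q T₁ : ℝ} (hq0 : 0 ≤ q)
    (hstep : ∀ t, T₁ ≤ t → n (t - 1) ≤ q * n t) :
    ∀ k : ℕ, ∀ t : ℝ, T₁ + k ≤ t + 1 → n (t - k) ≤ q ^ k * n t := by
  intro k
  induction k with
  | zero => intro t _; simp
  | succ k ih =>
    intro t ht
    push_cast at ht
    have hT1t : T₁ ≤ t := by
      have := Nat.cast_nonneg (α := ℝ) k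
      linarith
    have h1 : T₁ + k ≤ (t - 1) + 1 := by linarith
    have h2 : n ((t - 1) - k) ≤ q ^ k * n (t - 1) := ih (t - 1) (by push_cast; linarith)
    have h3 : n (t - 1) ≤ q * n t := hstep t hT1t
    have h4 : t - ((k : ℝ) + 1) = (t - 1) - k := by ring
    calc n (t - ((k : ℕ) + 1 : ℕ)) = n ((t - 1) - k) := by push_cast; rw [h4]
      _ ≤ q ^ k * n (t - 1) := h2
      _ ≤ q ^ k * (q * n t) := mul_le_mul_of_nonneg_left h3 (pow_nonneg hq0 k)
      _ = q ^ (k + 1) * n t := by ring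

lemma aux_core {n : ℝ → ℝ} (hn : Assumption1 n) {δ : ℝ}
    (hδlim : Filter.Tendsto (fun t : ℝ => Real.log (n t) / t) Filter.atTop (nhds δ))
    {c : ℝ} (hc0 : 0 ≤ c) (hcδ : c < δ) :
    Tendsto (fun t : ℝ => (∫ τ in (0:ℝ)..t, n τ * Real.exp (-c * τ)) * Real.exp (c * t) / n t)
      atTop (nhds (1 / (δ - c))) := by
  have hδ0 : 0 < δ := hc0.trans_lt hcδ
  have hmono := aux_mono hn
  have hnn := aux_nonneg hn
  have hpos := hn.2.2.2.1
  set q := Real.exp (-((δ + c)/2)) with hqdef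
  have hq0 : 0 < q := Real.exp_pos _
  have hlogq : Real.log q = -((δ + c)/2) := Real.log_exp _
  have hq1 : q < 1 := by
    rw [hqdef]
    have := Real.exp_lt_exp.mpr (show -((δ + c)/2) < 0 by linarith)
    rwa [Real.exp_zero] at this
  have hqδ : Real.exp (-δ) < q := by
    rw [hqdef]; exact Real.exp_lt_exp.mpr (by linarith)
  -- one-step bound
  have hx1 : Tendsto (fun t => n (t - 1) / n t) atTop (nhds (Real.exp (-δ))) := by
    simpa using aux_pointwise hn hδlim one_pos
  have hev1 : ∀ᶠ t in atTop, n (t - 1) ≤ q * n t := by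
    filter_upwards [hx1.eventually_le_const hqδ, eventually_ge_atTop (1:ℝ)] with t h1 h2
    have hnt : 0 < n t := hpos t (by linarith)
    calc n (t - 1) = (n (t - 1) / n t) * n t := by field_simp
      _ ≤ q * n t := mul_le_mul_of_nonneg_right h1 hnt.le
  obtain ⟨T₁', hT₁'⟩ := eventually_atTop.mp hev1
  set T₁ := max T₁' 1 with hT₁def
  have hT₁1 : (1:ℝ) ≤ T₁ := le_max_right _ _
  have hstep : ∀ t, T₁ ≤ t → n (t - 1) ≤ q * n t :=
    fun t ht => hT₁' t ((le_max_left _ _).trans ht)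
  have hiter := aux_iter hmono hq0.le hstep
  -- tail bound
  have htail : Tendsto (fun t => n t * Real.exp (t * Real.log q)) atTop atTop := by
    have h1 : Tendsto (fun t : ℝ => Real.log (n t) / t + Real.log q) atTop
        (nhds (δ + Real.log q)) := hδlim.add_const _
    have hpos2 : 0 < δ + Real.log q := by rw [hlogq]; linarith
    have h2 : Tendsto (fun t : ℝ => (Real.log (n t) / t + Real.log q) * t) atTop atTop :=
      Tendsto.pos_mul_atTop hpos2 h1 tendsto_id
    have h3 : Tendsto (fun t : ℝ => Real.log (n t) + t * Real.log q) atTop atTop := by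
      refine h2.congr' ?_
      filter_upwards [eventually_gt_atTop (0:ℝ)] with t ht
      field_simp
    refine (Real.tendsto_exp_atTop.comp h3).congr' ?_
    filter_upwards [eventually_ge_atTop (1:ℝ)] with t ht
    have hnt : 0 < n t := hpos t (by linarith)
    show Real.exp (Real.log (n t) + t * Real.log q) = n t * Real.exp (t * Real.log q)
    rw [Real.exp_add, Real.exp_log hnt]
  obtain ⟨T₂, hT₂⟩ := eventually_atTop.mp (htail.eventually_ge_atTop (q * n T₁))
  set T := max T₁ T₂ with hTdef
  have hT1 : (1:ℝ) ≤ T := hT₁1.trans (le_max_left _ _)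
  -- domination
  have hdom : ∀ t, T ≤ t → ∀ x, 0 ≤ x → x ≤ t → n (t - x) ≤ q ^ (x - 1) * n t := by
    intro t hTt x hx0 hxt
    have hT₁t : T₁ ≤ t := (le_max_left _ _).trans hTt
    have hnt : 0 < n t := hpos t (by linarith)
    by_cases hcase : x ≤ t + 1 - T₁
    · set k := ⌊x⌋₊ with hkdef
      have hkx : (k : ℝ) ≤ x := Nat.floor_le hx0
      have hxk : x < (k : ℝ) + 1 := Nat.lt_floor_add_one x
      have h1 : n (t - x) ≤ n (t - k) := hmono (by linarith)
      have h2 : n (t - k) ≤ q ^ k * n t := hiter k t (by linarith)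
      have h3 : (q : ℝ) ^ (k : ℕ) ≤ q ^ (x - 1) := by
        rw [← Real.rpow_natCast q k]
        exact Real.rpow_le_rpow_of_exponent_ge hq0 hq1.le (by linarith)
      calc n (t - x) ≤ q ^ k * n t := h1.trans h2
        _ ≤ q ^ (x - 1) * n t := mul_le_mul_of_nonneg_right h3 hnt.le
    · push_neg at hcase
      have h0 : t - x ≤ T₁ := by linarith
      have h1 : n (t - x) ≤ n T₁ := hmono h0
      have h2 : q * n T₁ ≤ n t * Real.exp (t * Real.log q) :=
        hT₂ t ((le_max_right _ _).trans hTt)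
      have hqt : Real.exp (t * Real.log q) = q ^ (t : ℝ) := by
        rw [Real.rpow_def_of_pos hq0, mul_comm]
      have h3 : n T₁ ≤ q ^ (t - 1) * n t := by
        rw [Real.rpow_sub hq0, Real.rpow_one]
        rw [hqt] at h2
        rw [div_mul_eq_mul_div, le_div_iff₀ hq0]
        calc n T₁ * q = q * n T₁ := by ring
          _ ≤ n t * q ^ (t : ℝ) := h2
          _ = q ^ (t : ℝ) * n t := by ring
      have h4 : (q : ℝ) ^ (t - 1) ≤ q ^ (x - 1) :=
        Real.rpow_le_rpow_of_exponent_ge hq0 hq1.le (by linarith)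
      calc n (t - x) ≤ q ^ (t - 1) * n t := h1.trans h3
        _ ≤ q ^ (x - 1) * n t := mul_le_mul_of_nonneg_right h4 hnt.le
  -- DCT setup
  set F : ℝ → ℝ → ℝ := fun t x =>
    (Set.Ioc (0:ℝ) t).indicator (fun x => n (t - x) * Real.exp (c * x) / n t) x with hFdef
  set flim : ℝ → ℝ := (Set.Ioi (0:ℝ)).indicator (fun x => Real.exp (-(δ - c) * x)) with hflimdef
  set bound : ℝ → ℝ := (Set.Ioi (0:ℝ)).indicator
    (fun x => q⁻¹ * Real.exp (-((δ - c)/2) * x)) with hbounddef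
  have hb2 : (0:ℝ) < (δ - c)/2 := by linarith
  have hFmeas : ∀ t : ℝ, AEStronglyMeasurable (F t) volume := by
    intro t
    apply Measurable.aestronglyMeasurable
    refine Measurable.indicator ?_ measurableSet_Ioc
    exact ((hmono.measurable.comp (measurable_const.sub measurable_id)).mul
      (Real.measurable_exp.comp (measurable_id.const_mul c))).div_const _
  have hboundint : Integrable bound := by
    rw [hbounddef, integrable_indicator_iff measurableSet_Ioi]
    exact (exp_neg_integrableOn_Ioi 0 hb2).const_mul _
  have hbound : ∀ᶠ t in atTop, ∀ᵐ x ∂(volume : Measure ℝ), ‖F t x‖ ≤ bound x := by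
    filter_upwards [eventually_ge_atTop T] with t hTt
    refine Filter.Eventually.of_forall fun x => ?_
    have hnt : 0 < n t := hpos t (by linarith)
    by_cases hx : x ∈ Set.Ioc (0:ℝ) t
    · simp only [hFdef]
      rw [Set.indicator_of_mem hx]
      have hb1 := hdom t hTt x hx.1.le hx.2
      have hbx : bound x = q ^ (x - 1) * Real.exp (c * x) := by
        simp only [hbounddef]
        rw [Set.indicator_of_mem (Set.mem_Ioi.mpr hx.1)]
        have hqinv : q⁻¹ = Real.exp (-Real.log q) := by
          rw [Real.exp_neg, Real.exp_log hq0]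
        rw [hqinv, Real.rpow_def_of_pos hq0, ← Real.exp_add, ← Real.exp_add]
        congr 1
        rw [hlogq]
        ring
      rw [hbx, Real.norm_eq_abs, abs_of_nonneg
        (div_nonneg (mul_nonneg (hnn _) (Real.exp_pos _).le) hnt.le)]
      rw [div_le_iff₀ hnt]
      calc n (t - x) * Real.exp (c * x) ≤ (q ^ (x - 1) * n t) * Real.exp (c * x) :=
            mul_le_mul_of_nonneg_right hb1 (Real.exp_pos _).le
        _ = q ^ (x - 1) * Real.exp (c * x) * n t := by ring
    · simp only [hFdef]
      rw [Set.indicator_of_notMem hx, norm_zero]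
      exact Set.indicator_nonneg (fun y _ => by positivity) x
  have hptlim : ∀ᵐ x ∂(volume : Measure ℝ),
      Tendsto (fun t => F t x) atTop (nhds (flim x)) := by
    refine Filter.Eventually.of_forall fun x => ?_
    by_cases hx : 0 < x
    · have h1 : Tendsto (fun t => n (t - x) / n t * Real.exp (c * x)) atTop
          (nhds (Real.exp (-(δ * x)) * Real.exp (c * x))) :=
        (aux_pointwise hn hδlim hx).mul_const _
      have h2 : Real.exp (-(δ * x)) * Real.exp (c * x) = Real.exp (-(δ - c) * x) := by
        rw [← Real.exp_add]; congr 1; ring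
      simp only [hflimdef]
      rw [Set.indicator_of_mem (Set.mem_Ioi.mpr hx)]
      rw [h2] at h1
      refine h1.congr' ?_
      filter_upwards [eventually_ge_atTop x] with t ht
      simp only [hFdef]
      rw [Set.indicator_of_mem (Set.mem_Ioc.mpr ⟨hx, ht⟩), mul_div_right_comm]
    · have hnot : ∀ t, F t x = 0 := fun t =>
        Set.indicator_of_notMem (fun hmem => hx hmem.1) _
      have hnotf : flim x = 0 := Set.indicator_of_notMem (by simpa using hx) _
      rw [hnotf]
      exact tendsto_const_nhds.congr fun t => (hnot t).symm
  have hdct := MeasureTheory.tendsto_integral_filter_of_dominated_convergence bound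
    (Filter.Eventually.of_forall hFmeas) hbound hboundint hptlim
  have hval : ∫ x, flim x = 1 / (δ - c) := by
    rw [hflimdef, MeasureTheory.integral_indicator measurableSet_Ioi,
      integral_exp_neg_mul_Ioi_zero (by linarith : (0:ℝ) < δ - c)]
  rw [hval] at hdct
  refine hdct.congr' ?_
  filter_upwards [eventually_ge_atTop (0:ℝ)] with t ht
  have key : ∫ x in (0:ℝ)..t, n (t - x) * Real.exp (c * x) =
      (∫ τ in (0:ℝ)..t, n τ * Real.exp (-c * τ)) * Real.exp (c * t) := by
    calc ∫ x in (0:ℝ)..t, n (t - x) * Real.exp (c * x)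
        = ∫ x in (0:ℝ)..t, (fun τ => n τ * Real.exp (c * (t - τ))) (t - x) := by
          refine intervalIntegral.integral_congr fun x _ => ?_
          simp only
          congr 2
          ring
      _ = ∫ τ in (t - t)..(t - 0), n τ * Real.exp (c * (t - τ)) :=
          intervalIntegral.integral_comp_sub_left (fun τ => n τ * Real.exp (c * (t - τ))) t
      _ = ∫ τ in (0:ℝ)..t, n τ * Real.exp (c * (t - τ)) := by rw [sub_self, sub_zero]
      _ = ∫ τ in (0:ℝ)..t, Real.exp (c * t) * (n τ * Real.exp (-c * τ)) := by
          refine intervalIntegral.integral_congr fun τ _ => ?_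
          rw [show Real.exp (c * (t - τ)) = Real.exp (c * t) * Real.exp (-c * τ) by
            rw [← Real.exp_add]; congr 1; ring]
          ring
      _ = Real.exp (c * t) * ∫ τ in (0:ℝ)..t, n τ * Real.exp (-c * τ) :=
          intervalIntegral.integral_const_mul _ _
      _ = (∫ τ in (0:ℝ)..t, n τ * Real.exp (-c * τ)) * Real.exp (c * t) := mul_comm _ _
  calc ∫ x, F t x = ∫ x in Set.Ioc (0:ℝ) t, n (t - x) * Real.exp (c * x) / n t :=
        MeasureTheory.integral_indicator measurableSet_Ioc
    _ = (∫ x in Set.Ioc (0:ℝ) t, n (t - x) * Real.exp (c * x)) / n t :=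
        MeasureTheory.integral_div _ _
    _ = (∫ x in (0:ℝ)..t, n (t - x) * Real.exp (c * x)) / n t := by
        rw [intervalIntegral.integral_of_le ht]
    _ = (∫ τ in (0:ℝ)..t, n τ * Real.exp (-c * τ)) * Real.exp (c * t) / n t := by
        rw [key]
lemma div_div_same_aux (X Y c : ℝ) (hc : c ≠ 0) : (X / c) / (Y / c) = X / Y := by
  by_cases hY : Y = 0
  · simp [hY]
  · field_simp


/-- If `δ* > 2λ` with `λ = 1 − β`, the variance of the clone size converges to
`(δ*/λ)(2/(δ*−2λ) − (2−λ)/(δ*−λ)) − (δ*/(δ*−λ))²`. Here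
`E(Y_t) = e^{λt} (∫_0^t n_τ e^{−λτ} dτ)/a_t` and
`E(Y_t²) = (e^{2λt}/(λ a_t))(2∫_0^t n_τ e^{−2λτ} dτ − (2−λ)e^{−λt}∫_0^t n_τ e^{−λτ} dτ)`
with `a_t = ∫_0^t n_τ dτ`. -/
theorem variance_clone_size_limit
    (β : ℝ) (hβ : β ∈ Set.Ico (0 : ℝ) 1)
    (n : ℝ → ℝ) (hn : Assumption1 n) (δ lam : ℝ) (hlam : lam = 1 - β)
    (hδlim : Filter.Tendsto (fun t : ℝ => Real.log (n t) / t) Filter.atTop (nhds δ))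
    (hδ : 2 * lam < δ)
    (a mean m2 : ℝ → ℝ)
    (ha : ∀ t : ℝ, a t = ∫ τ in (0:ℝ)..t, n τ)
    (hmean : ∀ t : ℝ,
      mean t = Real.exp (lam * t) * (∫ τ in (0:ℝ)..t, n τ * Real.exp (-lam * τ)) / a t)
    (hm2 : ∀ t : ℝ,
      m2 t = Real.exp (2 * lam * t) / (lam * a t) *
        (2 * (∫ τ in (0:ℝ)..t, n τ * Real.exp (-(2 * lam) * τ)) -
          (2 - lam) * Real.exp (-lam * t) * ∫ τ in (0:ℝ)..t, n τ * Real.exp (-lam * τ))) :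
    Filter.Tendsto (fun t : ℝ => m2 t - (mean t) ^ 2) Filter.atTop
      (nhds ((δ / lam) * (2 / (δ - 2 * lam) - (2 - lam) / (δ - lam)) -
        (δ / (δ - lam)) ^ 2)) := by
  obtain ⟨hβ0, hβ1⟩ := hβ
  have hlam0 : 0 < lam := by rw [hlam]; linarith
  have hδ2 : 0 < δ - 2 * lam := by linarith
  have hδl : 0 < δ - lam := by linarith
  have hδ0 : 0 < δ := by linarith
  have hδne : (1 : ℝ) / δ ≠ 0 := by positivity
  have hpos := hn.2.2.2.1
  have hA : Tendsto (fun t : ℝ =>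
      (∫ τ in (0:ℝ)..t, n τ * Real.exp (-lam * τ)) * Real.exp (lam * t) / n t)
      atTop (nhds (1 / (δ - lam))) := aux_core hn hδlim hlam0.le (by linarith)
  have hC : Tendsto (fun t : ℝ =>
      (∫ τ in (0:ℝ)..t, n τ * Real.exp (-(2 * lam) * τ)) * Real.exp (2 * lam * t) / n t)
      atTop (nhds (1 / (δ - 2 * lam))) := aux_core hn hδlim (by linarith) (by linarith)
  have hB : Tendsto (fun t : ℝ => a t / n t) atTop (nhds (1 / δ)) := by
    have h0 := aux_core hn hδlim (le_refl (0:ℝ)) hδ0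
    rw [sub_zero] at h0
    refine h0.congr fun t => ?_
    have ht1 : (∫ τ in (0:ℝ)..t, n τ * Real.exp (-(0:ℝ) * τ)) = a t := by
      rw [ha t]
      refine intervalIntegral.integral_congr fun τ _ => ?_
      simp
    rw [ht1]
    simp
  have hmean' : Tendsto mean atTop (nhds ((1 / (δ - lam)) / (1 / δ))) := by
    refine (hA.div hB hδne).congr' ?_
    filter_upwards [eventually_ge_atTop (1:ℝ)] with t ht
    have hnt : 0 < n t := hpos t (by linarith)
    simp only [Pi.div_apply]
    rw [hmean t, div_div_same_aux _ _ _ hnt.ne', mul_comm]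
  have hm2' : Tendsto m2 atTop
      (nhds (((1 / lam) * (2 * (1 / (δ - 2 * lam)) - (2 - lam) * (1 / (δ - lam)))) / (1 / δ))) := by
    have hcomb := (((hC.const_mul 2).sub (hA.const_mul (2 - lam))).const_mul (1 / lam)).div hB hδne
    refine hcomb.congr' ?_
    filter_upwards [eventually_ge_atTop (1:ℝ)] with t ht
    have hnt : 0 < n t := hpos t (by linarith)
    simp only [Pi.div_apply]
    rw [hm2 t]
    by_cases hat : a t = 0
    · simp [hat, div_zero]
    · have e1 : Real.exp (2 * lam * t) = Real.exp (lam * t) * Real.exp (lam * t) := by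
        rw [← Real.exp_add]; congr 1; ring
      have e2 : Real.exp (-lam * t) = (Real.exp (lam * t))⁻¹ := by
        rw [← Real.exp_neg]; congr 1; ring
      rw [e1, e2]
      have hexp : Real.exp (lam * t) ≠ 0 := (Real.exp_pos _).ne'
      field_simp
  have hfinal := hm2'.sub (hmean'.pow 2)
  have hval : (δ / lam) * (2 / (δ - 2 * lam) - (2 - lam) / (δ - lam)) - (δ / (δ - lam)) ^ 2 =
      ((1 / lam) * (2 * (1 / (δ - 2 * lam)) - (2 - lam) * (1 / (δ - lam)))) / (1 / δ) -
      ((1 / (δ - lam)) / (1 / δ)) ^ 2 := by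
    field_simp
  rw [hval]
  exact hfinal
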